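/- For the single-deletion recurrence D_0 = ... = D_{r-2} = 0, D_{r-1} = 1, and D_i/r! + D_{i-1}/(r-1)! + ... + D_{i-r}/0! = 0 for i ≥ r, the sequence satisfies |D_m| ≤ (2r)^{m-r+1} for all m ≥ r-1. -/

import Mathlib

lemma geom_half_le (n : ℕ) : ∑ j ∈ Finset.range n, ((1:ℝ)/2)^(j+1) ≤ 1 := by
  have h : ∑ j ∈ Finset.range n, ((1:ℝ)/2)^(j+1) = 1 - (1/2)^n := by
    induction n with
    | zero => simp
    | succ n ih => rw [Finset.sum_range_succ, ih]; ring
  rw [h]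
  have : (0:ℝ) ≤ (1/2)^n := by positivity
  linarith

theorem z_channel_D_bound (r : ℕ) (hr : 1 ≤ r) (D : ℕ → ℝ)
    (h0 : ∀ i, i < r - 1 → D i = 0) (h1 : D (r - 1) = 1)
    (hrec : ∀ i, r ≤ i →
      ∑ j ∈ Finset.range (r + 1), D (i - j) / ((r - j).factorial : ℝ) = 0) :
    ∀ m, r - 1 ≤ m → |D m| ≤ (2 * r : ℝ) ^ (m + 1 - r) := by
  have hr2 : (1:ℝ) ≤ 2 * r := by
    have : (1:ℝ) ≤ (r:ℝ) := by exact_mod_cast hr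
    linarith
  suffices H : ∀ i, |D i| ≤ (2 * r : ℝ) ^ (i + 1 - r) by
    intro m _; exact H m
  intro i
  induction i using Nat.strong_induction_on with
  | _ i ih =>
    rcases lt_or_ge i r with hi | hi
    · -- i < r : either i < r-1 (D i = 0) or i = r-1 (D i = 1, exponent 0)
      rcases lt_or_ge i (r-1) with h | h
      · rw [h0 i h, abs_zero]; positivity
      · have hieq : i = r - 1 := by omega
        have hexp : i + 1 - r = 0 := by omega
        rw [hexp, pow_zero] at *
        rw [hieq, h1, abs_one]
    · -- recurrence case
      set N := i + 1 - r with hN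
      have hfac : ((r.factorial : ℝ)) ≠ 0 := by
        exact_mod_cast r.factorial_pos.ne'
      have h := hrec i hi
      rw [Finset.sum_range_succ'] at h
      simp only [Nat.sub_zero] at h
      have hDi : D i = (-∑ j ∈ Finset.range r, D (i - (j+1)) / ((r - (j+1)).factorial : ℝ)) * (r.factorial : ℝ) := by
        rw [← div_eq_iff hfac]; linarith
      have key : ∀ j ∈ Finset.range r,
          (r.factorial : ℝ) * (|D (i - (j+1))| / ((r - (j+1)).factorial : ℝ)) ≤
            (2 * r : ℝ) ^ N * (1/2) ^ (j+1) := by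
        intro j hj
        rw [Finset.mem_range] at hj
        set k := j + 1 with hk
        have hk1 : 1 ≤ k := by omega
        have hkr : k ≤ r := by omega
        rcases le_or_gt k N with hkN | hkN
        · -- use ih
          have hlt : i - k < i := by omega
          have hih := ih (i - k) hlt
          have hexp : i - k + 1 - r = N - k := by omega
          rw [hexp] at hih
          have hfacle : (r.factorial : ℝ) ≤ ((r - k).factorial : ℝ) * (r : ℝ) ^ k := by
            have h1 : (r - k).factorial * r.descFactorial k = r.factorial :=
              Nat.factorial_mul_descFactorial hkr
            have h2 : r.descFactorial k ≤ r ^ k := Nat.descFactorial_le_pow r k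
            have : r.factorial ≤ (r - k).factorial * r ^ k := by
              rw [← h1]; exact Nat.mul_le_mul_left _ h2
            exact_mod_cast this
          have hfack : (0:ℝ) < ((r - k).factorial : ℝ) := by
            exact_mod_cast (r - k).factorial_pos
          have habs : (0:ℝ) ≤ |D (i - k)| := abs_nonneg _
          calc (r.factorial : ℝ) * (|D (i - k)| / ((r - k).factorial : ℝ))
              ≤ ((r - k).factorial : ℝ) * (r:ℝ)^k * (|D (i - k)| / ((r - k).factorial : ℝ)) := by
                apply mul_le_mul_of_nonneg_right hfacle; positivity
            _ = (r:ℝ)^k * |D (i - k)| := by field_simp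
            _ ≤ (r:ℝ)^k * (2 * r : ℝ) ^ (N - k) := by
                apply mul_le_mul_of_nonneg_left hih; positivity
            _ = (2 * r : ℝ) ^ N * (1/2) ^ k := by
                have : (2 * (r:ℝ)) ^ N = (2*r:ℝ)^(N-k) * (2*r:ℝ)^k := by
                  rw [← pow_add]; congr 1; omega
                rw [this, mul_assoc, ← mul_pow]
                ring_nf
        · -- D (i - k) = 0
          have : i - k < r - 1 := by omega
          rw [h0 _ this, abs_zero, zero_div, mul_zero]
          positivity
      have hstep : |D i| ≤ ∑ j ∈ Finset.range r,
          (r.factorial : ℝ) * (|D (i - (j+1))| / ((r - (j+1)).factorial : ℝ)) := by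
        rw [hDi, abs_mul, abs_neg, Nat.abs_cast]
        calc |∑ j ∈ Finset.range r, D (i - (j+1)) / ((r - (j+1)).factorial : ℝ)| * (r.factorial : ℝ)
            ≤ (∑ j ∈ Finset.range r, |D (i - (j+1)) / ((r - (j+1)).factorial : ℝ)|) * (r.factorial : ℝ) := by
              apply mul_le_mul_of_nonneg_right (Finset.abs_sum_le_sum_abs _ _); positivity
          _ = ∑ j ∈ Finset.range r, (r.factorial : ℝ) * (|D (i - (j+1))| / ((r - (j+1)).factorial : ℝ)) := by
              rw [Finset.sum_mul]
              refine Finset.sum_congr rfl fun j _ => ?_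
              rw [abs_div, Nat.abs_cast]; ring
      calc |D i| ≤ ∑ j ∈ Finset.range r,
            (r.factorial : ℝ) * (|D (i - (j+1))| / ((r - (j+1)).factorial : ℝ)) := hstep
        _ ≤ ∑ j ∈ Finset.range r, (2 * r : ℝ) ^ N * (1/2) ^ (j+1) := Finset.sum_le_sum key
        _ = (2 * r : ℝ) ^ N * ∑ j ∈ Finset.range r, ((1:ℝ)/2) ^ (j+1) := by rw [Finset.mul_sum]
        _ ≤ (2 * r : ℝ) ^ N * 1 := by
            apply mul_le_mul_of_nonneg_left (geom_half_le r); positivity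
        _ = (2 * r : ℝ) ^ N := mul_one _
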